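/- arXiv:0902.2842 — 2 statements merged into one kernel-verified Lean document; each statement's English description precedes it below -/
import Mathlib

section
/- Let k be a commutative ring with identity and let d < n be positive integers. Then J(n,d) is contained in the kernel of ρ_{λ(n,d)} : k[S_n] → End_k(k𝒯_{λ(n,d)}); equivalently, the generator y_d acts as zero on the tabloid module k𝒯_{λ(n,d)}. -/
open Finset

variable {n : ℕ}

/-- The parts of a partition sorted in weakly decreasing order, `μ_1 ≥ μ_2 ≥ …`. -/
def sortedParts (μ : Nat.Partition n) : List ℕ := μ.parts.sort (· ≥ ·)

/-- `μ` dominates `l`: for every `k`, `μ_1 + ⋯ + μ_k ≥ l_1 + ⋯ + l_k`. -/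
def Dominates (μ l : Nat.Partition n) : Prop :=
  ∀ k : ℕ, ((sortedParts l).take k).sum ≤ ((sortedParts μ).take k).sum

/-- A function `t : Fin n → Fin n` is a tabloid of shape `μ` if for each `i` the fiber
`t⁻¹(i)` (the `i`-th block of the ordered set partition) has exactly `μ_i` elements. -/
def IsTabloid (μ : Nat.Partition n) (t : Fin n → Fin n) : Prop :=
  ∀ i : Fin n, (Finset.univ.filter fun j => t j = i).card = (sortedParts μ).getD i.val 0

instance (μ : Nat.Partition n) : DecidablePred (IsTabloid μ) := fun t => by
  unfold IsTabloid; infer_instance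

/-- A tabloid of shape `μ`: an ordered partition of `{1, …, n}` into blocks of sizes
`μ_1, μ_2, …`, encoded by the function sending each element to the index of its block. -/
abbrev Tabloid (μ : Nat.Partition n) := {t : Fin n → Fin n // IsTabloid μ t}

theorem isTabloid_comp {μ : Nat.Partition n} {t : Fin n → Fin n} (ht : IsTabloid μ t)
    (σ : Equiv.Perm (Fin n)) : IsTabloid μ (t ∘ σ) := by
  intro i
  rw [← ht i]
  refine Finset.card_bij (fun j _ => σ j) ?_ ?_ ?_
  · intro a ha
    simp only [mem_filter, mem_univ, true_and, Function.comp_apply] at ha ⊢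
    exact ha
  · intro a _ b _ h
    exact σ.injective h
  · intro b hb
    simp only [mem_filter, mem_univ, true_and] at hb
    exact ⟨σ.symm b, by simp [hb], by simp⟩

/-- The (right) action of a permutation on tabloids of shape `μ`. -/
def permAct (μ : Nat.Partition n) (σ : Equiv.Perm (Fin n)) (t : Tabloid μ) : Tabloid μ :=
  ⟨t.val ∘ σ, isTabloid_comp t.prop σ⟩

/-- The action of `S_n` on the free module `k𝒯_μ` of tabloids, as a monoid homomorphism
into the endomorphism algebra: `(φ(σ) v) t = v (t ⋅ σ)`. -/
def permRep (k : Type) [CommRing k] (μ : Nat.Partition n) :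
    Equiv.Perm (Fin n) →* Module.End k (Tabloid μ → k) where
  toFun σ := LinearMap.funLeft k k (permAct μ σ)
  map_one' := by
    ext v t
    simp [permAct, LinearMap.funLeft]
  map_mul' σ τ := by
    ext v t
    rfl

/-- The `k`-algebra homomorphism `ρ_μ : k[S_n] → End_k(k𝒯_μ)` defining the tabloid
representation of the symmetric group. -/
noncomputable def rho (k : Type) [CommRing k] (μ : Nat.Partition n) :
    MonoidAlgebra k (Equiv.Perm (Fin n)) →ₐ[k] Module.End k (Tabloid μ → k) :=
  MonoidAlgebra.lift k (Module.End k (Tabloid μ → k)) (Equiv.Perm (Fin n)) (permRep k μ)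

/-- The element `y_d = Σ_{τ ∈ S_{d+1}} sgn(τ) τ`, the sum over the subgroup of `S_n` of
permutations fixing (in 1-indexed terms) the points `d+2, …, n`. -/
noncomputable def yd (k : Type) [CommRing k] (n d : ℕ) : MonoidAlgebra k (Equiv.Perm (Fin n)) :=
  ∑ τ ∈ Finset.univ.filter (fun τ : Equiv.Perm (Fin n) => ∀ i : Fin n, d + 1 ≤ i.val → τ i = i),
    MonoidAlgebra.single τ ((Equiv.Perm.sign τ : ℤ) : k)

/-- For `d < n`, the two-sided ideal `J(n,d)` of `k[S_n]` generated by `y_d`, viewed as a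
`k`-submodule. -/
noncomputable def Jnd (k : Type) [CommRing k] (n d : ℕ) :
    Submodule k (MonoidAlgebra k (Equiv.Perm (Fin n))) :=
  Submodule.span k {x | ∃ a b : MonoidAlgebra k (Equiv.Perm (Fin n)), x = a * yd k n d * b}

lemma exists_collision {n d : ℕ} (hdn : d < n) (l : Nat.Partition n)
    (hl : Multiset.card l.parts ≤ d) (t : Fin n → Fin n) (ht : IsTabloid l t) :
    ∃ i j : Fin n, i ≠ j ∧ i.val ≤ d ∧ j.val ≤ d ∧ t i = t j := by
  by_contra hcon
  push_neg at hcon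
  set A : Finset (Fin n) := Finset.univ.filter (fun i : Fin n => i.val ≤ d) with hA
  have hinjA : Set.InjOn t A := by
    intro a ha b hb hab
    by_contra hne
    have ha' : a.val ≤ d := (Finset.mem_filter.mp ha).2
    have hb' : b.val ≤ d := (Finset.mem_filter.mp hb).2
    exact hcon a b hne ha' hb' hab
  have hAcard : d + 1 ≤ A.card := by
    have : (Finset.range (d+1)).card ≤ A.card := by
      apply Finset.card_le_card_of_injOn (fun m => (⟨m % n, Nat.mod_lt _ (by omega)⟩ : Fin n))
      · intro m hm
        have hm' : m < d + 1 := Finset.mem_range.mp hm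
        have hmn : m < n := lt_of_lt_of_le hm' hdn
        simp only [hA, Finset.mem_filter, Finset.mem_univ, true_and]
        simp [Nat.mod_eq_of_lt hmn]
        omega
      · intro a ha b hb hab
        have ha' : a < n := lt_of_lt_of_le (Finset.mem_range.mp ha) hdn
        have hb' : b < n := lt_of_lt_of_le (Finset.mem_range.mp hb) hdn
        have := congrArg Fin.val hab
        simpa [Nat.mod_eq_of_lt ha', Nat.mod_eq_of_lt hb'] using this
    simpa using this
  have hlen : (sortedParts l).length ≤ d := by
    simpa [sortedParts] using hl
  have himgsub : A.image t ⊆ Finset.univ.filter (fun i : Fin n => i.val < d) := by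
    intro b hb
    obtain ⟨a, ha, rfl⟩ := Finset.mem_image.mp hb
    simp only [Finset.mem_filter, Finset.mem_univ, true_and]
    by_contra hge
    push_neg at hge
    have hge' : (sortedParts l).length ≤ (t a).val := le_trans hlen hge
    have h0 := ht (t a)
    rw [List.getD_eq_default _ _ hge'] at h0
    have : a ∈ Finset.univ.filter fun j => t j = t a := by simp
    have := Finset.card_pos.mpr ⟨a, this⟩
    omega
  have himgcard : d + 1 ≤ (A.image t).card := by
    rwa [Finset.card_image_of_injOn hinjA]
  have hsmall : (Finset.univ.filter (fun i : Fin n => i.val < d)).card ≤ d := by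
    have : (Finset.univ.filter (fun i : Fin n => i.val < d)).card ≤ (Finset.range d).card := by
      apply Finset.card_le_card_of_injOn (fun i => i.val)
      · intro a ha
        rw [Finset.mem_coe, Finset.mem_filter] at ha
        simpa using ha.2
      · intro a _ b _ hab
        exact Fin.ext hab
    simpa using this
  have := le_trans himgcard (le_trans (Finset.card_le_card himgsub) hsmall)
  omega

lemma rho_yd_eq_zero (k : Type) [CommRing k] (n d : ℕ) (hdn : d < n)
    (l : Nat.Partition n) (hl₁ : Multiset.card l.parts ≤ d) :
    rho k l (yd k n d) = 0 := by
  classical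
  apply LinearMap.ext; intro v
  funext t
  rw [yd, map_sum]
  simp only [rho, MonoidAlgebra.lift_single, LinearMap.sum_apply, LinearMap.smul_apply,
    Finset.sum_apply, Pi.smul_apply, LinearMap.zero_apply, Pi.zero_apply, smul_eq_mul]
  -- sum over H of sgn(τ) • v (permAct l τ t) at t
  obtain ⟨i, j, hij, hi, hj, hti⟩ := exists_collision hdn l hl₁ t.val t.prop
  set s : Equiv.Perm (Fin n) := Equiv.swap i j with hs
  have hsH : ∀ x : Fin n, d + 1 ≤ x.val → s x = x := by
    intro x hx
    apply Equiv.swap_apply_of_ne_of_ne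
    · intro h; rw [h] at hx; omega
    · intro h; rw [h] at hx; omega
  have hts : ∀ x : Fin n, t.val (s x) = t.val x := by
    intro x
    rcases eq_or_ne x i with rfl | hxi
    · rw [hs, Equiv.swap_apply_left, hti]
    rcases eq_or_ne x j with rfl | hxj
    · rw [hs, Equiv.swap_apply_right, hti]
    · rw [hs, Equiv.swap_apply_of_ne_of_ne hxi hxj]
  refine Finset.sum_involution (fun τ _ => s * τ) ?_ ?_ ?_ ?_
  · intro τ hτ
    have hact : permAct l (s * τ) t = permAct l τ t := by
      apply Subtype.ext
      funext x
      show t.val ((s * τ) x) = t.val (τ x)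
      rw [Equiv.Perm.mul_apply, hts]
    have hsgn : ((Equiv.Perm.sign (s * τ) : ℤ) : k) = -((Equiv.Perm.sign τ : ℤ) : k) := by
      rw [map_mul, Equiv.Perm.sign_swap hij]
      push_cast
      ring
    show ((Equiv.Perm.sign τ : ℤ) : k) • ((permRep k l) τ) v t
        + ((Equiv.Perm.sign (s * τ) : ℤ) : k) • ((permRep k l) (s * τ)) v t = 0
    simp only [permRep, MonoidHom.coe_mk, OneHom.coe_mk, LinearMap.funLeft_apply, hact, hsgn,
      smul_eq_mul]
    ring
  · intro τ _ _
    intro h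
    have : s = 1 := by
      have := congrArg (· * τ⁻¹) h
      simpa [mul_assoc] using this
    have : s i = i := by rw [this]; rfl
    rw [hs, Equiv.swap_apply_left] at this
    exact hij this.symm
  · intro τ hτ
    simp only [Finset.mem_filter, Finset.mem_univ, true_and] at hτ ⊢
    intro x hx
    rw [Equiv.Perm.mul_apply, hτ x hx, hsH x hx]
  · intro τ _
    simp [← mul_assoc, hs]

/-- over any commutative ring `k`, for positive integers `d < n` and with
`l = λ(n,d)` (the unique partition of `n` with at most `d` parts dominated by every
partition of `n` with at most `d` parts), the ideal `J(n,d)` is contained in the kernel of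
`ρ_{λ(n,d)}`; equivalently the generator `y_d` acts as zero on the tabloid module. -/
theorem statement3 (k : Type) [CommRing k] (n d : ℕ) (hd : 0 < d) (hdn : d < n)
    (l : Nat.Partition n) (hl₁ : Multiset.card l.parts ≤ d)
    (hl₂ : ∀ μ : Nat.Partition n, Multiset.card μ.parts ≤ d → Dominates μ l) :
    Jnd k n d ≤ LinearMap.ker (rho k l).toLinearMap ∧ rho k l (yd k n d) = 0  := by
  have h2 : rho k l (yd k n d) = 0 := rho_yd_eq_zero k n d hdn l hl₁
  refine ⟨?_, h2⟩
  rw [Jnd, Submodule.span_le]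
  rintro x ⟨a, b, rfl⟩
  simp [LinearMap.mem_ker, map_mul, h2]
end

section
/- Let k be a field of characteristic 2, n = 4 and λ = (2,2). Writing permutations of S_4 in one-line notation (σ(1)σ(2)σ(3)σ(4)), each of the eight permutations 2134, 2341, 2314, 1342, 3124, 1243, 4123, 1423 has RSK-shape (3,1), which dominates (2,2), and the sum of these eight permutations in k[S_4] acts as zero on the tabloid module k𝒯_{(2,2)} (i.e., lies in ker ρ_{(2,2)}). Consequently, the images in k[S_4]/ker(ρ_{(2,2)}) of the permutations of RSK-shape dominating (2,2) are k-linearly dependent, so they do not form a basis. -/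
open Finset

variable {n : ℕ}

/-- Schensted row insertion: insert `x` into a row, returning the new row and the bumped
entry (if any). -/
def insRow (x : ℕ) : List ℕ → List ℕ × Option ℕ
  | [] => ([x], none)
  | y :: ys =>
    if x < y then (x :: ys, some y)
    else
      let p := insRow x ys
      (y :: p.1, p.2)

/-- Schensted insertion of `x` into a tableau, given as its list of rows. -/
def insTab (x : ℕ) : List (List ℕ) → List (List ℕ)
  | [] => [[x]]
  | r :: rs =>
    match insRow x r with
    | (r', none) => r' :: rs
    | (r', some y) => r' :: insTab y rs

/-- The RSK-shape of a permutation `w`: the list of row lengths (equivalently, the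
partition of `n`) of the Robinson–Schensted insertion tableau of the word
`w(1), w(2), …, w(n)`. -/
def rskShape {n : ℕ} (w : Equiv.Perm (Fin n)) : List ℕ :=
  (((List.ofFn fun i : Fin n => (w i : ℕ))).foldl (fun T x => insTab x T) []).map List.length

/-- The shape `sh` (a weakly decreasing list of row lengths) dominates the partition `l`:
for every `k`, the sum of the first `k` entries of `sh` is at least `l_1 + ⋯ + l_k`. -/
def ShapeDominates {n : ℕ} (sh : List ℕ) (l : Nat.Partition n) : Prop :=
  ∀ k : ℕ, ((sortedParts l).take k).sum ≤ (sh.take k).sum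

/-- The partition `(2,2)` of `4`. -/
def lam22 : Nat.Partition 4 where
  parts := {2, 2}
  parts_pos := fun {i} hi => by
    simp only [Multiset.insert_eq_cons, Multiset.mem_cons, Multiset.mem_singleton] at hi
    omega
  parts_sum := by decide

open Equiv in
/-- The eight permutations `2134, 2341, 2314, 1342, 3124, 1243, 4123, 1423` of `S_4`
(one-line notation), written as products of transpositions of `{0,1,2,3}` (0-indexed). -/
def eightPerms : List (Equiv.Perm (Fin 4)) :=
  [ swap 0 1,                            -- 2134
    swap 0 1 * swap 1 2 * swap 2 3,      -- 2341
    swap 0 1 * swap 1 2,                 -- 2314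
    swap 1 2 * swap 2 3,                 -- 1342
    swap 1 2 * swap 0 1,                 -- 3124
    swap 2 3,                            -- 1243
    swap 2 3 * swap 1 2 * swap 0 1,      -- 4123
    swap 2 3 * swap 1 2 ]                -- 1423

lemma list_sum_apply' {k M N : Type} [CommRing k] [AddCommGroup M] [AddCommGroup N]
    [Module k M] [Module k N] (l : List (M →ₗ[k] N)) (v : M) :
    l.sum v = (l.map (fun f => f v)).sum := by
  induction l with
  | nil => rfl
  | cons a l ih => simp [List.sum_cons, LinearMap.add_apply, ih]

lemma list_sum_pi {α β : Type*} [AddCommMonoid β] (l : List (α → β)) (t : α) :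
    l.sum t = (l.map (fun g => g t)).sum := by
  induction l with
  | nil => rfl
  | cons a l ih => simp [List.sum_cons, Pi.add_apply, ih]

lemma pmap_map_val {α β : Type*} {p : α → Prop} (g : α → β) :
    ∀ (l : List α) (H : ∀ a ∈ l, p a),
    (l.pmap (fun a h => (⟨a, h⟩ : Subtype p)) H).map (fun x => g x.val) = l.map g := by
  intro l
  induction l with
  | nil => intro H; rfl
  | cons a l ih => intro H; simp [List.pmap, ih]

lemma sortedParts_lam22 : sortedParts lam22 = [2, 2] := by
  have h1 : (sortedParts lam22 : Multiset ℕ) = lam22.parts := Multiset.sort_eq _ _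
  have h2 : lam22.parts = ([2, 2] : List ℕ) := rfl
  refine List.Perm.eq_of_pairwise' (r := (· ≥ ·)) ?_ ?_ (Multiset.coe_eq_coe.mp (h1.trans h2))
  · exact Multiset.pairwise_sort ..
  · decide

set_option maxRecDepth 100000 in
set_option maxHeartbeats 2000000 in
lemma keyB : ∀ t : Fin 4 → Fin 4,
    (∀ i : Fin 4, (Finset.univ.filter fun j => t j = i).card = [2, 2].getD i.val 0) →
    ∀ σ0 ∈ eightPerms,
      2 ∣ (eightPerms.map fun σ : Equiv.Perm (Fin 4) => t ∘ ⇑σ).count (t ∘ ⇑σ0) := by decide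

lemma isTabloid_iff22 (t : Fin 4 → Fin 4) : IsTabloid lam22 t ↔
    (∀ i : Fin 4, (Finset.univ.filter fun j => t j = i).card = [2, 2].getD i.val 0) := by
  simp only [IsTabloid, sortedParts_lam22]

lemma part1 : ∀ w ∈ eightPerms, rskShape w = [3, 1] := by decide

lemma part2 : ShapeDominates [3, 1] lam22 := by
  intro m
  rw [sortedParts_lam22]
  match m with
  | 0 => simp
  | 1 => simp
  | (m + 2) => simp [List.take_succ_cons]

lemma part3 (k : Type) [Field k] [CharP k 2] :
    (eightPerms.map fun w => MonoidAlgebra.single w (1 : k)).sum ∈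
      LinearMap.ker (rho k lam22).toLinearMap := by
  rw [LinearMap.mem_ker]
  show rho k lam22 _ = 0
  rw [map_list_sum, List.map_map]
  have hcomp : (⇑(rho k lam22) ∘ fun w => MonoidAlgebra.single w (1 : k)) =
      fun w => (permRep k lam22 w : Module.End k (Tabloid lam22 → k)) := by
    funext w
    simp [rho, MonoidAlgebra.lift_single]
  rw [hcomp]
  apply LinearMap.ext; intro v
  rw [LinearMap.zero_apply, list_sum_apply', List.map_map]
  funext t
  rw [Pi.zero_apply, list_sum_pi, List.map_map]
  have hterm : ((fun g : Tabloid lam22 → k => g t) ∘ (fun f : Module.End k (Tabloid lam22 → k) => f v) ∘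
      fun w => (permRep k lam22 w : Module.End k (Tabloid lam22 → k))) =
      fun σ => v (permAct lam22 σ t) := rfl
  rw [hterm]
  have hvcomp : (fun σ : Equiv.Perm (Fin 4) => v (permAct lam22 σ t)) =
      v ∘ fun σ => permAct lam22 σ t := rfl
  rw [hvcomp, ← List.map_map]
  set l : List (Tabloid lam22) := eightPerms.map fun σ => permAct lam22 σ t with hl
  classical
  rw [Finset.sum_list_map_count]
  apply Finset.sum_eq_zero
  intro s hs
  rw [List.mem_toFinset, hl, List.mem_map] at hs
  obtain ⟨σ0, hσ0, hs⟩ := hs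
  have hcount : l.count s = (eightPerms.map fun σ : Equiv.Perm (Fin 4) =>
      t.val ∘ ⇑σ).count (t.val ∘ ⇑σ0) := by
    have hinj : Function.Injective (Subtype.val : Tabloid lam22 → (Fin 4 → Fin 4)) :=
      Subtype.val_injective
    have := List.count_map_of_injective (l := l) (f := Subtype.val) (x := s) hinj
    rw [← this, hl, List.map_map]
    have h2 : (Subtype.val ∘ fun σ : Equiv.Perm (Fin 4) => permAct lam22 σ t) =
        fun σ : Equiv.Perm (Fin 4) => t.val ∘ ⇑σ := rfl
    have h3 : s.val = t.val ∘ ⇑σ0 := by rw [← hs]; rfl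
    rw [h2, h3]
  have hdvd : 2 ∣ l.count s := by
    rw [hcount]
    exact keyB t.val ((isTabloid_iff22 t.val).mp t.prop) σ0 hσ0
  have hzero : ((l.count s : ℕ) : k) = 0 := (CharP.cast_eq_zero_iff k 2 _).mpr hdvd
  rw [nsmul_eq_mul]; convert mul_eq_zero_of_left hzero (v s) using 4 <;> exact lawful_beq_subsingleton _ _

lemma part4 (k : Type) [Field k] [CharP k 2] :
    ¬ LinearIndependent k
      (fun w : {w : Equiv.Perm (Fin 4) // ShapeDominates (rskShape w) lam22} =>
        (Submodule.Quotient.mk (MonoidAlgebra.single w.val 1) :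
          MonoidAlgebra k (Equiv.Perm (Fin 4)) ⧸ LinearMap.ker (rho k lam22).toLinearMap)) := by
  classical
  intro hli
  rw [linearIndependent_iff'] at hli
  have hmem : ∀ w ∈ eightPerms, ShapeDominates (rskShape w) lam22 := fun w hw => by
    rw [part1 w hw]; exact part2
  set ι := {w : Equiv.Perm (Fin 4) // ShapeDominates (rskShape w) lam22}
  let l8 : List ι := eightPerms.pmap (fun w h => ⟨w, h⟩) hmem
  have hnodup : l8.Nodup := by
    refine List.Nodup.pmap (fun a _ b _ hab => ?_) (by decide)
    exact congrArg Subtype.val hab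
  set Q := (LinearMap.ker (rho k lam22).toLinearMap).mkQ with hQ
  set f : ι → (MonoidAlgebra k (Equiv.Perm (Fin 4)) ⧸
      LinearMap.ker (rho k lam22).toLinearMap) :=
    fun w => Submodule.Quotient.mk (MonoidAlgebra.single w.val 1) with hf
  have hsum : ∑ i ∈ l8.toFinset, (fun _ : ι => (1 : k)) i • f i = 0 := by
    simp only [one_smul]
    rw [List.sum_toFinset _ hnodup]
    have hmap : l8.map f = eightPerms.map fun w => Q (MonoidAlgebra.single w (1 : k)) := by
      have := pmap_map_val (p := fun w => ShapeDominates (rskShape w) lam22)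
        (fun w => Q (MonoidAlgebra.single w (1 : k))) eightPerms hmem
      rw [← this]
      rfl
    have e1 : (eightPerms.map fun w => Q (MonoidAlgebra.single w (1 : k))) =
        List.map ⇑Q (eightPerms.map fun w => MonoidAlgebra.single w (1 : k)) := by
      rw [List.map_map]; rfl
    rw [hmap, e1, ← map_list_sum, hQ, Submodule.mkQ_apply, Submodule.Quotient.mk_eq_zero]
    exact part3 k
  have h1 : ((⟨Equiv.swap 0 1, hmem _ (by simp [eightPerms])⟩ : ι)) ∈ l8.toFinset := by
    rw [List.mem_toFinset]
    exact List.mem_pmap.mpr ⟨Equiv.swap 0 1, by simp [eightPerms], rfl⟩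
  have := hli l8.toFinset (fun _ => (1 : k)) hsum _ h1
  exact one_ne_zero this

/-- over a field `k` of characteristic `2`, each of the eight listed
permutations of `S_4` has RSK-shape `(3,1)`, which dominates `(2,2)`; their sum lies in
the kernel of the tabloid representation `ρ_{(2,2)}`; consequently the images in
`k[S_4]/ker ρ_{(2,2)}` of the permutations of RSK-shape dominating `(2,2)` are linearly
dependent, hence cannot be the values of a basis. -/
theorem statement10 (k : Type) [Field k] [CharP k 2] :
    (∀ w ∈ eightPerms, rskShape w = [3, 1]) ∧
    ShapeDominates [3, 1] lam22 ∧
    (eightPerms.map fun w => MonoidAlgebra.single w (1 : k)).sum ∈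
      LinearMap.ker (rho k lam22).toLinearMap ∧
    ¬ LinearIndependent k
      (fun w : {w : Equiv.Perm (Fin 4) // ShapeDominates (rskShape w) lam22} =>
        (Submodule.Quotient.mk (MonoidAlgebra.single w.val 1) :
          MonoidAlgebra k (Equiv.Perm (Fin 4)) ⧸ LinearMap.ker (rho k lam22).toLinearMap)) ∧
    ¬ ∃ B : Module.Basis {w : Equiv.Perm (Fin 4) // ShapeDominates (rskShape w) lam22} k
        (MonoidAlgebra k (Equiv.Perm (Fin 4)) ⧸ LinearMap.ker (rho k lam22).toLinearMap),
      ∀ w, B w = Submodule.Quotient.mk (MonoidAlgebra.single w.val 1) := by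
  refine ⟨part1, part2, part3 k, part4 k, ?_⟩
  rintro ⟨B, hB⟩
  apply part4 k
  have : (fun w : {w : Equiv.Perm (Fin 4) // ShapeDominates (rskShape w) lam22} =>
      (Submodule.Quotient.mk (MonoidAlgebra.single w.val 1) :
        MonoidAlgebra k (Equiv.Perm (Fin 4)) ⧸ LinearMap.ker (rho k lam22).toLinearMap)) = ⇑B :=
    funext fun w => (hB w).symm
  rw [this]
  exact B.linearIndependent
end
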